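/- Let G = (V,E) be a finite simple strongly connected directed graph and let W ⊊ V be a proper strongly connected subset. Then det(L_W) is irreducible as a polynomial in the polynomial ring ℂ[x_e (e ∈ E), y_v (v ∈ W)]. -/

import Mathlib

open Classical Finset

noncomputable section

variable {V : Type*} {R : Type*} [CommRing R]

/-- An oriented spanning tree of the digraph `E` on `V`: `root` has outdegree 0
(convention `out root = root`), every other vertex `v` has a unique outgoing edge
`(v, out v)` which is an edge of the graph, and iterating `out` from any vertex
reaches the root (no cycles). -/
structure SpTree [Fintype V] (E : V → V → Prop) where
  root : V
  out : V → V
  out_root : out root = root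
  edge_mem : ∀ v, v ≠ root → E v (out v)
  reach : ∀ v, ∃ n, out^[n] v = root

theorem SpTree.ext' [Fintype V] {E : V → V → Prop} {a b : SpTree E}
    (h1 : a.root = b.root) (h2 : a.out = b.out) : a = b := by
  cases a; cases b; dsimp at h1 h2; subst h1; subst h2; rfl

noncomputable instance [Fintype V] (E : V → V → Prop) : Fintype (SpTree E) :=
  Fintype.ofInjective (fun a => (a.root, a.out)) fun a b h =>
    SpTree.ext' (congrArg Prod.fst h) (congrArg Prod.snd h)

/-- An oriented forest of the digraph `E`, rooted in the set `U`. -/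
structure SpForest [Fintype V] (E : V → V → Prop) (U : Finset V) where
  out : V → V
  out_root : ∀ v ∈ U, out v = v
  edge_mem : ∀ v, v ∉ U → E v (out v)
  reach : ∀ v, ∃ n, out^[n] v ∈ U

theorem SpForest.ext' [Fintype V] {E : V → V → Prop} {U : Finset V} {a b : SpForest E U}
    (h : a.out = b.out) : a = b := by
  cases a; cases b; dsimp at h; subst h; rfl

noncomputable instance [Fintype V] (E : V → V → Prop) (U : Finset V) :
    Fintype (SpForest E U) :=
  Fintype.ofInjective SpForest.out fun _ _ h => SpForest.ext' h

/-- The adjacency relation of the tree graph `𝒯G`: there is an edge from `a` to `b`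
if `b` is obtained from `a` by adding the edge `(a.root, b.root)` of `G` and deleting
the edge of `a` going out of `b.root`. -/
def TStep [Fintype V] (E : V → V → Prop) (a b : SpTree E) : Prop :=
  E a.root b.root ∧ a.root ≠ b.root ∧ b.out a.root = b.root ∧
    ∀ v, v ≠ a.root → v ≠ b.root → b.out v = a.out v

/-- The set `W` is strongly connected in the digraph `E` (for the induced subgraph). -/
def SConn (E : V → V → Prop) (W : Set V) : Prop :=
  ∀ u ∈ W, ∀ v ∈ W, Relation.ReflTransGen (fun a b => E a b ∧ a ∈ W ∧ b ∈ W) u v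

/-- Edge-weighted Laplacian matrix of the digraph `E`, with weight `x (v,w)` on the
edge from `v` to `w`. -/
def lapM [Fintype V] (E : V → V → Prop) (x : V × V → R) : Matrix V V R :=
  Matrix.of fun v w =>
    if v = w then -(∑ u ∈ univ.filter (fun u => E v u), x (v, u))
    else if E v w then x (v, w) else 0

/-- Schrödinger operator `L = Q + Y` with potential `y`. -/
def schrM [Fintype V] (E : V → V → Prop) (x : V × V → R) (y : V → R) : Matrix V V R :=
  lapM E x + Matrix.diagonal y

/-- Weighted adjacency matrix. -/
def adjM [Fintype V] (E : V → V → Prop) (x : V × V → R) : Matrix V V R :=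
  Matrix.of fun v w => if E v w then x (v, w) else 0

/-- Submatrix keeping rows and columns indexed by `W`. -/
def subM [Fintype V] (M : Matrix V V R) (W : Finset V) :
    Matrix {v // v ∈ W} {v // v ∈ W} R :=
  M.submatrix Subtype.val Subtype.val

/-- The lifted edge weights on the tree graph: the edge from `a` to `b` in `𝒯G`
carries the weight of the edge of `G` from `a.root` to `b.root`. -/
def xT [Fintype V] (E : V → V → Prop) (x : V × V → R) : SpTree E × SpTree E → R :=
  fun p => x (p.1.root, p.2.root)

/-- The lifted potential on the tree graph. -/
def yT [Fintype V] (E : V → V → Prop) (y : V → R) : SpTree E → R :=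
  fun a => y a.root

/-- Weight `π_𝐚` of a spanning tree: product of its edge weights. -/
def treeWt [Fintype V] {E : V → V → Prop} (x : V × V → R) (a : SpTree E) : R :=
  ∏ v ∈ univ.filter (fun v => v ≠ a.root), x (v, a.out v)

/-- Generating polynomial of the oriented spanning trees of `E`. -/
def FGpoly [Fintype V] (E : V → V → Prop) (x : V × V → R) : R :=
  ∑ a : SpTree E, treeWt x a

/-- Weight `π_𝐟` of a forest: product of its edge weights. -/
def forestWt [Fintype V] {E : V → V → Prop} {U : Finset V} (x : V × V → R)
    (f : SpForest E U) : R :=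
  ∏ v ∈ univ.filter (fun v => v ∉ U), x (v, f.out v)

/-- Generating polynomial `Ψ_U` of the oriented forests of `E` rooted in `U`. -/
def PsiF [Fintype V] (E : V → V → Prop) (U : Finset V) (x : V × V → R) : R :=
  ∑ f : SpForest E U, forestWt x f

/-- Generating polynomial of the oriented spanning trees of the tree graph `𝒯G`. -/
def FTGpoly [Fintype V] (E : V → V → Prop) (x : V × V → R) : R :=
  FGpoly (TStep E) (xT E x)

/-- The polynomial ring `ℂ[x_e (e ∈ V × V), y_v (v ∈ V)]`. -/
abbrev Rng (V : Type*) := MvPolynomial ((V × V) ⊕ V) ℂ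

/-- The edge variable `x_e`. -/
def xv {V : Type*} : V × V → Rng V := fun e => MvPolynomial.X (Sum.inl e)

/-- The vertex variable `y_v`. -/
def yv {V : Type*} : V → Rng V := fun v => MvPolynomial.X (Sum.inr v)

/-! ### The exploration algorithm -/

/-- The state of the exploration algorithm: a set `A` of explored vertices, a FIFO
list `Lq` of edges to be examined, a reservoir `F` of edges, and the set `Er` of
erased vertices. -/
structure ExpState (V : Type*) where
  A : Finset V
  Lq : List (V × V)
  F : Finset (V × V)
  Er : Finset V

/-- The list of the edges of `S` with target `w`, ordered by increasing source. -/
def sortedTo (ord : LinearOrder V) (S : Finset (V × V)) (w : V) : List (V × V) :=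
  letI := ord
  (((S.filter (fun f => f.2 = w)).image Prod.fst).sort (· ≤ ·)).map fun u => (u, w)

/-- The edge `e` belongs to the tree `a`. -/
def inTree [Fintype V] {E : V → V → Prop} (a : SpTree E) (e : V × V) : Prop :=
  e.1 ≠ a.root ∧ a.out e.1 = e.2

/-- One iteration of the exploration algorithm: pick the first edge `e` of the list,
with source `w`; if `e` belongs to the tree then add `w` to `A`, delete all edges with
source `w` from the list, and append the edges of `F` with target `w` by increasing
source; otherwise erase `w`, deleting all edges with source or target `w` from the
list and from `F`. -/
def expStep [Fintype V] {E : V → V → Prop} (ord : LinearOrder V) (a : SpTree E)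
    (s : ExpState V) : ExpState V :=
  match s.Lq with
  | [] => s
  | e :: rest =>
    if inTree a e then
      { A := insert e.1 s.A
        Lq := rest.filter (fun f => decide (f.1 ≠ e.1)) ++ sortedTo ord s.F e.1
        F := s.F
        Er := s.Er }
    else
      { A := s.A
        Lq := rest.filter (fun f => decide (f.1 ≠ e.1 ∧ f.2 ≠ e.1))
        F := s.F.filter (fun f => f.1 ≠ e.1 ∧ f.2 ≠ e.1)
        Er := insert e.1 s.Er }

/-- The initial state of the exploration algorithm run on a tree rooted at `v`:
`A = {v}`, the list consists of the edges with target `v` by increasing source, and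
`F` is the set of edges with source `≠ v`. -/
def expInit [Fintype V] {E : V → V → Prop} (ord : LinearOrder V) (a : SpTree E) :
    ExpState V :=
  letI := ord
  { A := {a.root}
    Lq := ((univ.filter (fun u => E u a.root)).sort (· ≤ ·)).map fun u => (u, a.root)
    F := univ.filter fun f : V × V => E f.1 f.2 ∧ f.1 ≠ a.root
    Er := (∅ : Finset V) }

/-- The final state of the exploration algorithm (the number of iterations below is
large enough for the list to be exhausted, after which the state no longer moves). -/
def expRun [Fintype V] {E : V → V → Prop} (ord : LinearOrder V) (a : SpTree E) :
    ExpState V :=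
  (expStep ord a)^[2 * Fintype.card (V × V) + 1] (expInit ord a)

/-- The set `φ(𝐚)` of explored vertices. -/
def expPhi [Fintype V] {E : V → V → Prop} (ord : LinearOrder V) (a : SpTree E) : Finset V :=
  (expRun ord a).A

/-- The set of erased vertices. -/
def expEr [Fintype V] {E : V → V → Prop} (ord : LinearOrder V) (a : SpTree E) : Finset V :=
  (expRun ord a).Er

/-- The set `ψ(𝐚)`: the strongly connected component of the root in the subgraph
induced on `φ(𝐚)`. -/
def expPsi [Fintype V] {E : V → V → Prop} (ord : LinearOrder V) (a : SpTree E) : Finset V :=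
  univ.filter fun u => u ∈ expPhi ord a ∧
    Relation.ReflTransGen
      (fun p q => E p q ∧ p ∈ expPhi ord a ∧ q ∈ expPhi ord a) a.root u ∧
    Relation.ReflTransGen
      (fun p q => E p q ∧ p ∈ expPhi ord a ∧ q ∈ expPhi ord a) u a.root

/-- The multiplicity `m(W, w)`: the number of oriented spanning trees `𝐚` rooted at
`w` with `ψ(𝐚) = W`. -/
def multCount [Fintype V] (E : V → V → Prop) (ord : LinearOrder V) (W : Finset V)
    (w : V) : ℕ :=
  Nat.card {a : SpTree E // a.root = w ∧ expPsi ord a = W}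

/-- The multiplicity `m(W)` (the common value of the `m(W, w)`, `w ∈ W`). -/
def multW [Fintype V] (E : V → V → Prop) (ord : LinearOrder V) (W : Finset V) : ℕ :=
  letI := ord
  if h : W.Nonempty then multCount E ord W (W.min' h) else 0

end

namespace S10




variable {ι : Type*} [Fintype ι] [DecidableEq ι] {R : Type*} [CommRing R]

theorem det_piecewise_single (N : Matrix ι ι R) (s : Finset ι) :
    Matrix.det (Matrix.of (sᶜ.piecewise (fun i => (Pi.single i 1 : ι → R)) (fun i => N i))) =
      Matrix.det (N.submatrix (fun i : {x // x ∈ s} => (i : ι)) (fun i : {x // x ∈ s} => (i : ι))) := by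
  classical
  let e : {x // x ∈ s} ⊕ {x // x ∉ s} ≃ ι := Equiv.sumCompl (· ∈ s)
  rw [← Matrix.det_submatrix_equiv_self e]
  have : (Matrix.of (sᶜ.piecewise (fun i => (Pi.single i 1 : ι → R)) (fun i => N i))).submatrix e e
      = Matrix.fromBlocks
        (N.submatrix (fun i : {x // x ∈ s} => (i : ι)) (fun i : {x // x ∈ s} => (i : ι)))
        (N.submatrix (fun i : {x // x ∈ s} => (i : ι)) (fun i : {x // x ∉ s} => (i : ι)))
        0 1 := by
    ext i j
    cases i with
    | inl i =>
      have hi : (i : ι) ∉ sᶜ := by simp [i.2]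
      cases j with
      | inl j => simp [Matrix.submatrix, e, Finset.piecewise, hi]
      | inr j => simp [Matrix.submatrix, e, Finset.piecewise, hi]
    | inr i =>
      have hi : (i : ι) ∈ sᶜ := by simp [i.2]
      cases j with
      | inl j =>
        have hj : (j : ι) ≠ (i : ι) := by
          intro h; exact i.2 (h ▸ j.2)
        simp [Matrix.submatrix, e, Finset.piecewise, hi, i.2, Pi.single_apply, hj]
      | inr j =>
        simp [Matrix.submatrix, e, Finset.piecewise, hi, i.2, Pi.single_apply,
          Matrix.one_apply, eq_comm, Subtype.ext_iff]
  rw [this, Matrix.det_fromBlocks_zero₂₁, Matrix.det_one, mul_one]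

theorem det_add_diagonal (N : Matrix ι ι R) (y : ι → R) :
    Matrix.det (N + Matrix.diagonal y) =
      ∑ s : Finset ι, (∏ i ∈ sᶜ, y i) *
        Matrix.det (N.submatrix (fun i : {x // x ∈ s} => (i : ι)) (fun i : {x // x ∈ s} => (i : ι))) := by
  classical
  have hrows : (N + Matrix.diagonal y : Matrix ι ι R) =
      Matrix.of ((fun i => N i) + (fun i => y i • (Pi.single i 1 : ι → R))) := by
    ext i j
    by_cases h : i = j <;>
      simp [Matrix.diagonal_apply, Pi.single_apply, h, eq_comm, mul_comm]
  rw [hrows]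
  let f := (Matrix.detRowAlternating : (ι → R) [⋀^ι]→ₗ[R] R).toMultilinearMap
  calc Matrix.det (Matrix.of ((fun i => N i) + fun i => y i • (Pi.single i 1 : ι → R)))
      = f ((fun i => N i) + fun i => y i • (Pi.single i 1 : ι → R)) := rfl
    _ = ∑ s : Finset ι, f (s.piecewise (fun i => N i) (fun i => y i • (Pi.single i 1 : ι → R))) :=
        f.map_add_univ _ _
    _ = _ := by
        refine Finset.sum_congr rfl fun s _ => ?_
        rw [← Finset.piecewise_compl]
        set m'' : ι → ι → R := sᶜ.piecewise (fun i => (Pi.single i 1 : ι → R)) (fun i => N i)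
          with hm''
        have e1 : sᶜ.piecewise (fun i => y i • (Pi.single i 1 : ι → R)) (fun i => N i) =
            sᶜ.piecewise (fun i => (if i ∈ sᶜ then y i else 1) • m'' i) m'' := by
          funext i
          by_cases h : i ∈ sᶜ <;> simp [Finset.piecewise, h, m'']
        rw [e1, f.map_piecewise_smul (fun i => if i ∈ sᶜ then y i else 1) m'' sᶜ, smul_eq_mul]
        congr 1
        · exact Finset.prod_congr rfl fun i hi => if_pos hi
        · exact det_piecewise_single N s

theorem nilpotent_of_height (N : Matrix ι ι R) (h : ι → ℕ)
    (H : ∀ i j, N i j ≠ 0 → h j < h i) : IsNilpotent N := by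
  classical
  have key : ∀ k (i j : ι), (N ^ k) i j ≠ 0 → k ≤ h i := by
    intro k
    induction k with
    | zero => intro i j _; exact Nat.zero_le _
    | succ k ih =>
      intro i j hne
      rw [pow_succ'] at hne
      have : ∃ u, N i u * (N ^ k) u j ≠ 0 := by
        by_contra hc
        push_neg at hc
        exact hne (by simp [Matrix.mul_apply, hc])
      obtain ⟨u, hu⟩ := this
      have h1 : N i u ≠ 0 := fun h0 => hu (by simp [h0])
      have h2 : (N ^ k) u j ≠ 0 := fun h0 => hu (by simp [h0])
      exact Nat.succ_le_of_lt (lt_of_le_of_lt (ih u j h2) (H i u h1))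
  refine ⟨(Finset.univ.sup h) + 1, ?_⟩
  ext i j
  by_contra hne
  have := key _ i j hne
  have : (Finset.univ.sup h) + 1 ≤ Finset.univ.sup h :=
    le_trans this (Finset.le_sup (mem_univ i))
  omega



open Finset



open MvPolynomial

variable {σ : Type*} {R : Type*}

theorem degreeOf_mul_eq_add [CommRing R] [IsDomain R] [Fintype σ] (v : σ)
    {P Q : MvPolynomial σ R} (hP : P ≠ 0) (hQ : Q ≠ 0) :
    degreeOf v (P * Q) = degreeOf v P + degreeOf v Q := by
  classical
  haveI : Nonempty σ := ⟨v⟩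
  obtain ⟨n, hn⟩ : ∃ n, Fintype.card σ = n + 1 :=
    Nat.exists_eq_succ_of_ne_zero (Fintype.card_ne_zero (α := σ))
  let e1 : σ ≃ Fin (n + 1) := Fintype.equivFinOfCardEq hn
  let g : σ ≃ Fin (n + 1) := e1.trans (Equiv.swap (e1 v) 0)
  have hg : g v = 0 := by simp [g]
  have hdeg : ∀ f : MvPolynomial σ R,
      degreeOf v f = (MvPolynomial.finSuccEquiv R n (rename g f)).natDegree := by
    intro f
    rw [natDegree_finSuccEquiv, ← hg, degreeOf_rename_of_injective g.injective]
  have hn0 : ∀ f : MvPolynomial σ R, f ≠ 0 → MvPolynomial.finSuccEquiv R n (rename g f) ≠ 0 := by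
    intro f hf h0
    apply hf
    have := (MvPolynomial.finSuccEquiv R n).injective
      (a₁ := rename g f) (a₂ := 0) (by simpa using h0)
    exact (rename_injective g g.injective) (by simpa using this)
  rw [hdeg, hdeg, hdeg, map_mul, map_mul, Polynomial.natDegree_mul (hn0 P hP) (hn0 Q hQ)]

theorem eq_C_of_vars_empty [CommSemiring R] {p : MvPolynomial σ R} (h : p.vars = ∅) :
    p = C (coeff 0 p) := by
  classical
  have hs : p.support ⊆ {0} := by
    intro m hm
    rw [Finset.mem_singleton]
    by_contra hm0
    obtain ⟨v, hv⟩ : m.support.Nonempty := Finsupp.support_nonempty_iff.2 hm0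
    have : v ∈ p.vars := (mem_vars v).2 ⟨m, hm, hv⟩
    simp [h] at this
  rcases Finset.subset_singleton_iff.1 hs with h0 | h0
  · have : p = 0 := by
      rwa [← support_eq_empty]
    simp [this]
  · conv_lhs => rw [← support_sum_monomial_coeff p]
    rw [h0, Finset.sum_singleton, C_apply]

set_option maxHeartbeats 1000000 in
theorem coeff_mul_split [CommSemiring R] {P Q : MvPolynomial σ R} {mP mQ : σ →₀ ℕ}
    (S : Set σ) (hPv : ∀ v ∈ P.vars, v ∈ S) (hQv : ∀ v ∈ Q.vars, v ∉ S)
    (hmP : ∀ v, v ∉ S → mP v = 0) (hmQ : ∀ v, v ∈ S → mQ v = 0) :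
    coeff (mP + mQ) (P * Q) = coeff mP P * coeff mQ Q := by
  classical
  rw [coeff_mul]
  have hmem : ((mP, mQ) : (σ →₀ ℕ) × (σ →₀ ℕ)) ∈ Finset.HasAntidiagonal.antidiagonal (mP + mQ) :=
    Finset.HasAntidiagonal.mem_antidiagonal.2 rfl
  refine Finset.sum_eq_single_of_mem (mP, mQ) hmem ?_
  · rintro ⟨a, b⟩ hab hne
    rw [Finset.HasAntidiagonal.mem_antidiagonal] at hab
    by_contra hc
    have ha : coeff a P ≠ 0 := fun h => hc (by simp [h])
    have hb : coeff b Q ≠ 0 := fun h => hc (by simp [h])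
    have hav : ∀ v, v ∉ S → a v = 0 := by
      intro v hv
      by_contra h0
      exact hv (hPv v ((mem_vars v).2 ⟨a, mem_support_iff.2 ha, Finsupp.mem_support_iff.2 h0⟩))
    have hbv : ∀ v, v ∈ S → b v = 0 := by
      intro v hv
      by_contra h0
      exact hQv v ((mem_vars v).2 ⟨b, mem_support_iff.2 hb, Finsupp.mem_support_iff.2 h0⟩) hv
    apply hne
    have hpt : ∀ v, a v + b v = mP v + mQ v := by
      intro v
      have := DFunLike.congr_fun hab v
      simpa using this
    have haP : a = mP := by
      ext v
      by_cases hv : v ∈ S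
      · have := hpt v; rw [hbv v hv, hmQ v hv] at this; omega
      · rw [hav v hv, hmP v hv]
    have hbQ : b = mQ := by
      ext v
      by_cases hv : v ∈ S
      · rw [hbv v hv, hmQ v hv]
      · have := hpt v; rw [hav v hv, hmP v hv] at this; omega
    rw [haP, hbQ]

theorem degreeOf_ge_one_of_mem_vars [CommSemiring R] {p : MvPolynomial σ R} {v : σ}
    (h : v ∈ p.vars) : 1 ≤ degreeOf v p := by
  classical
  obtain ⟨m, hm, hv⟩ := (mem_vars v).1 h
  rw [degreeOf_eq_sup]
  calc 1 ≤ m v := Nat.one_le_iff_ne_zero.2 (Finsupp.mem_support_iff.1 hv)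
    _ ≤ _ := Finset.le_sup (f := fun m => m v) hm



open Finset



variable {V : Type*}

theorem exists_crossing {r : V → V → Prop} {p : V → Prop} {u w : V}
    (h : Relation.ReflTransGen r u w) (hu : p u) (hw : ¬ p w) :
    ∃ a b, r a b ∧ p a ∧ ¬ p b := by
  revert hu
  induction h using Relation.ReflTransGen.head_induction_on with
  | refl => exact fun hu => absurd hu hw
  | head h1 h2 ih =>
    rename_i x' z
    intro hx'
    by_cases hz : p z
    · exact ih hz
    · exact ⟨x', z, h1, hx', hz⟩

theorem pathFun [DecidableEq V] {r : V → V → Prop} {x y : V}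
    (h : Relation.ReflTransGen r x y) :
    ∃ (R : Finset V) (nxt : V → V), x ∈ R ∧ y ∈ R ∧ nxt y = y ∧
      (∀ v ∈ R, nxt v ∈ R) ∧ (∀ v ∈ R, v ≠ y → r v (nxt v)) ∧
      (∀ v ∈ R, ∃ n, nxt^[n] v = y) := by
  induction h using Relation.ReflTransGen.head_induction_on with
  | refl => exact ⟨{y}, id, by simp, by simp, rfl, by simp, by simp, fun v hv => ⟨0, by
      simpa using hv⟩⟩
  | @head x' z hxz hzy ih =>
    obtain ⟨R, nxt, hz, hy, hny, hcl, hedge, hreach⟩ := ih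
    by_cases hx : x' ∈ R
    · exact ⟨R, nxt, hx, hy, hny, hcl, hedge, hreach⟩
    · refine ⟨insert x' R, Function.update nxt x' z, Finset.mem_insert_self _ _,
        Finset.mem_insert_of_mem hy, ?_, ?_, ?_, ?_⟩
      · have : y ≠ x' := fun h => hx (h ▸ hy)
        rw [Function.update_of_ne this, hny]
      · intro v hv
        rcases Finset.mem_insert.1 hv with rfl | hv
        · rw [Function.update_self]; exact Finset.mem_insert_of_mem hz
        · rw [Function.update_of_ne (fun h : _ = x' => hx (h ▸ hv))]
          exact Finset.mem_insert_of_mem (hcl v hv)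
      · intro v hv hvy
        rcases Finset.mem_insert.1 hv with rfl | hv
        · rw [Function.update_self]; exact hxz
        · rw [Function.update_of_ne (fun h : _ = x' => hx (h ▸ hv))]; exact hedge v hv hvy
      · -- reach
        have hiter : ∀ n v, v ∈ R → nxt^[n] v = y →
            (Function.update nxt x' z)^[n] v = y := by
          intro n
          induction n with
          | zero => intro v _ h0; simpa using h0
          | succ n ihn =>
            intro v hv h0
            rw [Function.iterate_succ_apply] at h0 ⊢
            rw [Function.update_of_ne (fun h : _ = x' => hx (h ▸ hv))]
            exact ihn (nxt v) (hcl v hv) h0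
        intro v hv
        rcases Finset.mem_insert.1 hv with rfl | hv
        · obtain ⟨n, hn⟩ := hreach z hz
          exact ⟨n + 1, by
            rw [Function.iterate_succ_apply, Function.update_self]
            exact hiter n z hz hn⟩
        · obtain ⟨n, hn⟩ := hreach v hv
          exact ⟨n, hiter n v hv hn⟩

/-- Assemble a "cycle-like" structure: from an edge `a → b` and a path `b ⇝ a`,
a finite set `R` stable under `nxt`, on which every vertex has an edge to its
successor and every orbit visits both `a` and `b`. -/
theorem cycleFun [DecidableEq V] {r : V → V → Prop} {a b : V} (hab : r a b)
    (h : Relation.ReflTransGen r b a) :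
    ∃ (R : Finset V) (nxt : V → V), a ∈ R ∧ b ∈ R ∧
      (∀ v ∈ R, r v (nxt v) ∧ nxt v ∈ R) ∧
      (∀ v ∈ R, ∃ n, nxt^[n] v = a) ∧ (∀ v ∈ R, ∃ n, nxt^[n] v = b) := by
  obtain ⟨R, nxt0, hb, ha, hna, hcl, hedge, hreach⟩ := pathFun h
  set nxt := Function.update nxt0 a b with hnxt
  have hcl' : ∀ v ∈ R, nxt v ∈ R := by
    intro v hv
    rw [hnxt]
    by_cases hva : v = a
    · subst hva; rw [Function.update_self]; exact hb
    · rw [Function.update_of_ne hva]; exact hcl v hv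
  have hreach' : ∀ v ∈ R, ∃ n, nxt^[n] v = a := by
    intro v hv
    obtain ⟨n, hn⟩ := hreach v hv
    clear hv
    induction n generalizing v with
    | zero => exact ⟨0, by simpa using hn⟩
    | succ n ihn =>
      by_cases hva : v = a
      · exact ⟨0, by simpa using hva⟩
      · rw [Function.iterate_succ_apply] at hn
        obtain ⟨m, hm⟩ := ihn (nxt0 v) hn
        refine ⟨m + 1, ?_⟩
        rw [Function.iterate_succ_apply, hnxt, Function.update_of_ne hva]
        exact hm
  refine ⟨R, nxt, ha, hb, ?_, hreach', ?_⟩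
  · intro v hv
    refine ⟨?_, hcl' v hv⟩
    rw [hnxt]
    by_cases hva : v = a
    · subst hva; rw [Function.update_self]; exact hab
    · rw [Function.update_of_ne hva]; exact hedge v hv (fun h => hva h)
  · intro v hv
    obtain ⟨n, hn⟩ := hreach' v hv
    refine ⟨n + 1, ?_⟩
    rw [Function.iterate_succ_apply', hn, hnxt, Function.update_self]




open MvPolynomial

theorem map_lapM {V R R' : Type*} [CommRing R] [CommRing R'] [Fintype V] (f : R →+* R')
    (E : V → V → Prop) (x : V × V → R) (v w : V) :
    f (lapM E x v w) = lapM E (fun e => f (x e)) v w := by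
  simp only [lapM, Matrix.of_apply]
  split_ifs with h1 h2
  · rw [map_neg, map_sum]
  · rfl
  · exact map_zero f

theorem prod_X_mul_C {σ R : Type*} [CommSemiring R] {ι' : Type*} (t : Finset ι') (g : ι' → σ)
    (b : R) :
    (∏ i ∈ t, MvPolynomial.X (g i)) * MvPolynomial.C b =
      MvPolynomial.monomial (∑ i ∈ t, Finsupp.single (g i) 1) b := by
  classical
  induction t using Finset.induction with
  | empty => rw [Finset.prod_empty, Finset.sum_empty, one_mul, MvPolynomial.C_apply]
  | insert a t hnew ih =>
    rw [Finset.prod_insert hnew, Finset.sum_insert hnew, mul_assoc, ih,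
      MvPolynomial.X, MvPolynomial.monomial_mul, one_mul]

variable {V : Type*} [Fintype V]

/-- The `x`-Laplacian over the polynomial ring `B = ℂ[x]`, restricted to `W`. -/
noncomputable def QW (E : V → V → Prop) (W : Finset V) :
    Matrix {x // x ∈ W} {x // x ∈ W} (MvPolynomial (V × V) ℂ) :=
  fun i j => lapM E MvPolynomial.X i.1 j.1

/-- Principal minor of the `x`-Laplacian on a subset `s` of `W`. -/
noncomputable def dB (E : V → V → Prop) (W : Finset V) (s : Finset {x // x ∈ W}) :
    MvPolynomial (V × V) ℂ :=
  ((QW E W).submatrix (fun i : {x // x ∈ s} => i.1) (fun i : {x // x ∈ s} => i.1)).det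

/-- The square-free monomial supported on the vertices of `W` outside `s`. -/
noncomputable def monW (W : Finset V) (s : Finset {x // x ∈ W}) : V →₀ ℕ :=
  ∑ i ∈ sᶜ, Finsupp.single i.1 1

/-- The variable-splitting isomorphism `ℂ[x,y] ≃ (ℂ[x])[y]`. -/
noncomputable def eVB (V : Type*) :
    Rng V ≃+* MvPolynomial V (MvPolynomial (V × V) ℂ) :=
  ((MvPolynomial.renameEquiv ℂ (Equiv.sumComm (V × V) V)).trans
    (MvPolynomial.sumAlgEquiv ℂ V (V × V))).toRingEquiv

omit [Fintype V] in
theorem eVB_xv (f : V × V) : eVB V (xv f) = MvPolynomial.C (MvPolynomial.X f) := by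
  show (MvPolynomial.sumAlgEquiv ℂ V (V × V))
    (MvPolynomial.rename (Equiv.sumComm (V × V) V) (MvPolynomial.X (Sum.inl f))) = _
  rw [MvPolynomial.rename_X, show (Equiv.sumComm (V × V) V) (Sum.inl f) = Sum.inr f from rfl]
  exact MvPolynomial.sumAlgEquiv_X_inr ℂ V (V × V) f

omit [Fintype V] in
theorem eVB_yv (v : V) : eVB V (yv v) = MvPolynomial.X v := by
  show (MvPolynomial.sumAlgEquiv ℂ V (V × V))
    (MvPolynomial.rename (Equiv.sumComm (V × V) V) (MvPolynomial.X (Sum.inr v))) = _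
  rw [MvPolynomial.rename_X, show (Equiv.sumComm (V × V) V) (Sum.inr v) = Sum.inl v from rfl]
  exact MvPolynomial.sumAlgEquiv_X_inl ℂ V (V × V) v

theorem monW_apply_mem (W : Finset V) (s : Finset {x // x ∈ W}) {v : V} (h : v ∈ W) :
    monW W s v = if (⟨v, h⟩ : {x // x ∈ W}) ∈ s then 0 else 1 := by
  classical
  rw [monW, Finset.sum_apply']
  by_cases hs : (⟨v, h⟩ : {x // x ∈ W}) ∈ s
  · rw [if_pos hs]
    apply Finset.sum_eq_zero
    intro i hi
    rw [Finsupp.single_apply, if_neg]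
    intro hiv
    rw [Finset.mem_compl] at hi
    have hie : i = ⟨v, h⟩ := Subtype.ext hiv
    exact hi (hie ▸ hs)
  · rw [if_neg hs]
    rw [Finset.sum_eq_single (⟨v, h⟩ : {x // x ∈ W})]
    · rw [Finsupp.single_apply, if_pos rfl]
    · intro i _ hne
      rw [Finsupp.single_apply, if_neg (fun hiv => hne (Subtype.ext hiv))]
    · intro hns
      exact absurd (Finset.mem_compl.2 hs) hns

theorem monW_apply_not_mem (W : Finset V) (s : Finset {x // x ∈ W}) {v : V} (h : v ∉ W) :
    monW W s v = 0 := by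
  classical
  rw [monW, Finset.sum_apply']
  apply Finset.sum_eq_zero
  intro i _
  rw [Finsupp.single_apply, if_neg]
  intro hiv
  exact h (hiv ▸ i.2)

theorem monW_le_one (W : Finset V) (s : Finset {x // x ∈ W}) (v : V) : monW W s v ≤ 1 := by
  by_cases h : v ∈ W
  · rw [monW_apply_mem W s h]; split <;> omega
  · rw [monW_apply_not_mem W s h]; omega

theorem monW_injective (W : Finset V) : Function.Injective (monW W) := by
  intro s t hst
  ext i
  have := DFunLike.congr_fun hst i.1
  rw [monW_apply_mem W s i.2, monW_apply_mem W t i.2] at this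
  by_cases hs : i ∈ s <;> by_cases ht : i ∈ t <;>
    simp_all

/-- Canonical form: the image of `det L_W` in `(ℂ[x])[y]`. -/
theorem canonForm (E : V → V → Prop) (W : Finset V) :
    eVB V (Matrix.det (subM (schrM E (xv (V := V)) (yv (V := V))) W)) =
      ∑ s : Finset {x // x ∈ W}, MvPolynomial.monomial (monW W s) (dB E W s) := by
  classical
  rw [RingEquiv.map_det]
  have hlap : ∀ v w : V, eVB V (lapM E (xv (V := V)) v w) =
      MvPolynomial.C (lapM E MvPolynomial.X v w) := by
    intro v w
    have h1 := map_lapM (eVB V).toRingHom E (xv (V := V)) v w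
    have h2 := map_lapM
      (MvPolynomial.C : MvPolynomial (V × V) ℂ →+* MvPolynomial V (MvPolynomial (V × V) ℂ)) E
      MvPolynomial.X v w
    rw [show ∀ z, (eVB V).toRingHom z = eVB V z from fun _ => rfl] at h1
    rw [h1, h2]
    congr 1
    funext f
    exact eVB_xv f
  have hmat : (eVB V).mapMatrix (subM (schrM E (xv (V := V)) (yv (V := V))) W) =
      (Matrix.of fun i j => MvPolynomial.C (QW E W i j)) +
        Matrix.diagonal (fun i : {x // x ∈ W} => MvPolynomial.X i.1) := by
    refine Matrix.ext fun i j => ?_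
    show eVB V (subM (schrM E (xv (V := V)) (yv (V := V))) W i j) = _
    have hsub0 : subM (schrM E (xv (V := V)) (yv (V := V))) W i j =
        lapM E (xv (V := V)) i.1 j.1 + Matrix.diagonal (yv (V := V)) i.1 j.1 := rfl
    rw [hsub0, map_add, hlap, Matrix.add_apply, Matrix.of_apply,
      Matrix.diagonal_apply, Matrix.diagonal_apply]
    congr 1
    rw [apply_ite (eVB V), map_zero, eVB_yv]
    by_cases h : i = j
    · simp [h]
    · rw [if_neg h, if_neg (fun hh : (i : V) = (j : V) => h (Subtype.ext hh))]
  rw [hmat, det_add_diagonal]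
  refine Finset.sum_congr rfl fun s _ => ?_
  have hsub : ((Matrix.of fun i j => MvPolynomial.C (QW E W i j)).submatrix
        (fun i : {x // x ∈ s} => (i : {x // x ∈ W})) (fun i : {x // x ∈ s} => (i : {x // x ∈ W})))
      = (MvPolynomial.C :
          MvPolynomial (V × V) ℂ →+* MvPolynomial V (MvPolynomial (V × V) ℂ)).mapMatrix
          ((QW E W).submatrix (fun i : {x // x ∈ s} => i.1) (fun i : {x // x ∈ s} => i.1)) := by
    ext i j; rfl
  rw [hsub, ← RingHom.map_det]
  rw [show ((MvPolynomial.C : MvPolynomial (V × V) ℂ →+* MvPolynomial V (MvPolynomial (V × V) ℂ))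
      ((QW E W).submatrix (fun i : {x // x ∈ s} => i.1) (fun i : {x // x ∈ s} => i.1)).det)
    = MvPolynomial.C (dB E W s) from rfl]
  rw [prod_X_mul_C sᶜ (fun i : {x // x ∈ W} => i.1) (dB E W s)]
  rfl

theorem coeff_canon (E : V → V → Prop) (W : Finset V) (s₀ : Finset {x // x ∈ W}) :
    MvPolynomial.coeff (monW W s₀)
      (∑ s : Finset {x // x ∈ W}, MvPolynomial.monomial (monW W s) (dB E W s)) = dB E W s₀ := by
  classical
  rw [MvPolynomial.coeff_sum]
  rw [Finset.sum_eq_single s₀]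
  · rw [MvPolynomial.coeff_monomial, if_pos rfl]
  · intro s _ hne
    rw [MvPolynomial.coeff_monomial, if_neg (fun h => hne (monW_injective W h))]
  · intro h; exact absurd (Finset.mem_univ s₀) h

theorem eval_dB (E : V → V → Prop) (W : Finset V) (c : V × V → ℂ) (s : Finset {x // x ∈ W}) :
    MvPolynomial.eval c (dB E W s) =
      ((Matrix.of (fun i j : {x // x ∈ W} => lapM E c i.1 j.1)).submatrix
        (fun i : {x // x ∈ s} => i.1) (fun i : {x // x ∈ s} => i.1)).det := by
  classical
  rw [dB, RingHom.map_det]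
  congr 1
  ext i j
  simp only [RingHom.mapMatrix_apply, Matrix.map_apply, Matrix.submatrix_apply, Matrix.of_apply,
    QW]
  rw [map_lapM (MvPolynomial.eval c) E MvPolynomial.X]
  congr 1
  funext f
  exact MvPolynomial.eval_X (f := c) f


section DetFacts

variable {V : Type*} [Fintype V] (E : V → V → Prop) (W : Finset V)
  (R : Finset V) (nxt : V → V)

/-- The 0/1 edge weights of the cycle-like structure `(R, nxt)`. -/
noncomputable def cwt : V × V → ℂ := fun f => if f.1 ∈ R ∧ f.2 = nxt f.1 then 1 else 0

theorem lapM_cwt_apply (hEstep : ∀ v ∈ R, E v (nxt v)) (hne : ∀ v ∈ R, nxt v ≠ v)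
    (v w : V) :
    lapM E (cwt R nxt) v w =
      if v = w then (if v ∈ R then -1 else 0)
      else (if v ∈ R ∧ w = nxt v then 1 else 0) := by
  classical
  rw [lapM, Matrix.of_apply]
  by_cases hvw : v = w
  · rw [if_pos hvw, if_pos hvw]
    by_cases hv : v ∈ R
    · rw [if_pos hv]
      have : ∑ u ∈ univ.filter (fun u => E v u), cwt R nxt (v, u) = 1 := by
        have h1 : ∀ u ∈ univ.filter (fun u => E v u), cwt R nxt (v, u) =
            if u = nxt v then 1 else 0 := by
          intro u _
          simp only [cwt, hv, true_and]
        rw [Finset.sum_congr rfl h1, Finset.sum_ite_eq' (univ.filter (fun u => E v u)) (nxt v)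
          (fun _ => (1 : ℂ))]
        rw [if_pos (Finset.mem_filter.2 ⟨Finset.mem_univ _, hEstep v hv⟩)]
      rw [this]
    · rw [if_neg hv]
      have : ∑ u ∈ univ.filter (fun u => E v u), cwt R nxt (v, u) = 0 := by
        apply Finset.sum_eq_zero
        intro u _
        simp only [cwt, hv, false_and, if_false]
      rw [this, neg_zero]
  · rw [if_neg hvw, if_neg hvw]
    by_cases hc : v ∈ R ∧ w = nxt v
    · rw [if_pos hc, if_pos (hc.2 ▸ hEstep v hc.1)]
      exact if_pos hc
    · rw [if_neg hc]
      by_cases hE : E v w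
      · rw [if_pos hE]
        exact if_neg hc
      · rw [if_neg hE]

/-- The principal minor of the evaluated Laplacian on the full cycle set vanishes. -/
theorem eval_dB_cycle_zero (hRW : ∀ v ∈ R, v ∈ W)
    (hEstep : ∀ v ∈ R, E v (nxt v)) (hclR : ∀ v ∈ R, nxt v ∈ R)
    (hne : ∀ v ∈ R, nxt v ≠ v) (hRne : R.Nonempty)
    (s : Finset {x // x ∈ W}) (hschar : ∀ i : {x // x ∈ W}, i ∈ s ↔ (i.1 : V) ∈ R) :
    MvPolynomial.eval (cwt R nxt) (dB E W s) = 0 := by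
  classical
  rw [eval_dB]
  rw [← Matrix.exists_mulVec_eq_zero_iff]
  obtain ⟨a, ha⟩ := hRne
  have haW : a ∈ W := hRW a ha
  refine ⟨fun _ => 1, ?_, ?_⟩
  · intro h0
    have := congrFun h0 ⟨⟨a, haW⟩, (hschar _).2 ha⟩
    simp at this
  · funext i
    have hiR : (i.1 : V) ∈ R := (hschar _).1 i.2
    have hnR : nxt (i.1 : V) ∈ R := hclR _ hiR
    set j₀ : {x // x ∈ s} := ⟨⟨nxt (i.1 : V), hRW _ hnR⟩, (hschar _).2 hnR⟩ with hj₀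
    have hij₀ : i ≠ j₀ := by
      intro h
      exact hne (i.1 : V) hiR (congrArg (fun z : {x // x ∈ s} => (z.1 : V)) h).symm
    have hterm : ∀ j : {x // x ∈ s},
        ((Matrix.of (fun i j : {x // x ∈ W} => lapM E (cwt R nxt) i.1 j.1)).submatrix
          (fun k : {x // x ∈ s} => k.1) (fun k : {x // x ∈ s} => k.1)) i j * 1 =
        (if j = i then (-1 : ℂ) else 0) + (if j = j₀ then 1 else 0) := by
      intro j
      rw [mul_one, Matrix.submatrix_apply, Matrix.of_apply,
        lapM_cwt_apply E R nxt hEstep hne]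
      by_cases hji : j = i
      · subst hji
        rw [if_pos rfl, if_pos hiR, if_pos rfl, if_neg hij₀, add_zero]
      · have hvne : (i.1 : V) ≠ (j.1 : V) := by
          intro h
          exact hji (Subtype.ext (Subtype.ext h.symm))
        rw [if_neg hvne, if_neg hji]
        by_cases hjj : j = j₀
        · subst hjj
          rw [if_pos ⟨hiR, rfl⟩, if_pos rfl, zero_add]
        · rw [if_neg hjj, zero_add, if_neg]
          intro hcon
          apply hjj
          apply Subtype.ext; apply Subtype.ext
          exact hcon.2
    rw [Matrix.mulVec]
    show ∑ j, _ = (0 : ℂ)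
    rw [Finset.sum_congr rfl (fun j _ => hterm j)]
    rw [Finset.sum_add_distrib, Finset.sum_ite_eq' univ i (fun _ => (-1 : ℂ)),
      Finset.sum_ite_eq' univ j₀ (fun _ => (1 : ℂ))]
    simp

/-- The principal minor of the evaluated Laplacian on a block is non-singular. -/
theorem eval_dB_block_ne_zero (hRW : ∀ v ∈ R, v ∈ W)
    (hEstep : ∀ v ∈ R, E v (nxt v)) (hclR : ∀ v ∈ R, nxt v ∈ R)
    (hne : ∀ v ∈ R, nxt v ≠ v) (pb : V → Prop)
    (hesc : ∀ v ∈ R, pb v → ∃ n, ¬ pb (nxt^[n] v))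
    (s : Finset {x // x ∈ W})
    (hschar : ∀ i : {x // x ∈ W}, i ∈ s ↔ ((i.1 : V) ∈ R ∧ pb (i.1 : V))) :
    MvPolynomial.eval (cwt R nxt) (dB E W s) ≠ 0 := by
  classical
  rw [eval_dB]
  have hmemR : ∀ j : {x // x ∈ s}, (j.1 : V) ∈ R := fun j => ((hschar _).1 j.2).1
  have hmemb : ∀ j : {x // x ∈ s}, pb (j.1 : V) := fun j => ((hschar _).1 j.2).2
  set N : Matrix {x // x ∈ s} {x // x ∈ s} ℂ :=
    Matrix.of (fun j k : {x // x ∈ s} => if (k.1 : V) = nxt (j.1 : V) then 1 else 0) with hN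
  have hmat : ((Matrix.of (fun i j : {x // x ∈ W} => lapM E (cwt R nxt) i.1 j.1)).submatrix
      (fun k : {x // x ∈ s} => k.1) (fun k : {x // x ∈ s} => k.1)) = N - 1 := by
    refine Matrix.ext fun j k => ?_
    rw [Matrix.submatrix_apply, Matrix.of_apply, lapM_cwt_apply E R nxt hEstep hne,
      Matrix.sub_apply, hN, Matrix.of_apply, Matrix.one_apply]
    by_cases hjk : j = k
    · subst hjk
      rw [if_pos rfl, if_pos rfl, if_pos (hmemR j),
        if_neg (fun h : (j.1 : V) = nxt (j.1 : V) => hne _ (hmemR j) h.symm)]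
      ring
    · have hvne : (j.1 : V) ≠ (k.1 : V) := fun h => hjk (Subtype.ext (Subtype.ext h))
      rw [if_neg hvne, if_neg hjk, sub_zero]
      by_cases hk : (k.1 : V) = nxt (j.1 : V)
      · rw [if_pos ⟨hmemR j, hk⟩, if_pos hk]
      · rw [if_neg (fun h => hk h.2), if_neg hk]
  rw [hmat]
  have hescj : ∀ j : {x // x ∈ s}, ∃ n, ¬ pb (nxt^[n] (j.1 : V)) :=
    fun j => hesc _ (hmemR j) (hmemb j)
  have hnil : IsNilpotent N := by
    apply S10.nilpotent_of_height N (fun j => Nat.find (hescj j))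
    intro j k hjk
    have hk : (k.1 : V) = nxt (j.1 : V) := by
      by_contra h
      rw [hN, Matrix.of_apply, if_neg h] at hjk
      exact hjk rfl
    have hj0 : Nat.find (hescj j) ≠ 0 := by
      intro h0
      have := Nat.find_spec (hescj j)
      rw [h0] at this
      exact this (hmemb j)
    have hiter : nxt^[Nat.find (hescj j) - 1] (k.1 : V) = nxt^[Nat.find (hescj j)] (j.1 : V) := by
      rw [hk, ← Function.iterate_succ_apply]
      congr 1
      omega
    have hle : Nat.find (hescj k) ≤ Nat.find (hescj j) - 1 := by
      apply Nat.find_min'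
      rw [hiter]
      exact Nat.find_spec (hescj j)
    omega
  have hunit : IsUnit ((1 : Matrix {x // x ∈ s} {x // x ∈ s} ℂ) - N) :=
    hnil.isUnit_one_sub
  have hdet : IsUnit ((1 : Matrix {x // x ∈ s} {x // x ∈ s} ℂ) - N).det :=
    (Matrix.isUnit_iff_isUnit_det _).1 hunit
  have : (N - 1 : Matrix {x // x ∈ s} {x // x ∈ s} ℂ) = -(1 - N) := (neg_sub _ _).symm
  rw [this, Matrix.det_neg]
  exact mul_ne_zero (pow_ne_zero _ (neg_ne_zero.2 one_ne_zero)) hdet.ne_zero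

end DetFacts
variable {V : Type*} [Fintype V]

/-- Partial monomial: product of the `y`-variables over a subset `t` of `W`. -/
noncomputable def monF (W : Finset V) (t : Finset {x // x ∈ W}) : V →₀ ℕ :=
  ∑ i ∈ t, Finsupp.single i.1 1

omit [Fintype V] in
theorem monF_apply_zero (W : Finset V) (t : Finset {x // x ∈ W}) (v : V)
    (h : ∀ i ∈ t, (i.1 : V) ≠ v) : monF W t v = 0 := by
  rw [monF, Finset.sum_apply']
  exact Finset.sum_eq_zero fun i hi => by rw [Finsupp.single_apply, if_neg (h i hi)]

theorem dB_empty (E : V → V → Prop) (W : Finset V) :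
    dB E W (∅ : Finset {x // x ∈ W}) = 1 := by
  rw [dB]
  haveI : IsEmpty {x : {v // v ∈ W} // x ∈ (∅ : Finset {v // v ∈ W})} :=
    ⟨fun i => (Finset.notMem_empty _ i.2)⟩
  exact Matrix.det_isEmpty

theorem DT_supp (E : V → V → Prop) (W : Finset V) :
    ∀ m ∈ (∑ s : Finset {x // x ∈ W},
      MvPolynomial.monomial (monW W s) (dB E W s)).support, ∃ s, m = monW W s := by
  intro m hm
  have := MvPolynomial.support_sum hm
  obtain ⟨s, _, hs⟩ := Finset.mem_biUnion.1 this
  rw [MvPolynomial.support_monomial] at hs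
  split_ifs at hs
  · exact absurd hs (Finset.notMem_empty m)
  · exact ⟨s, (Finset.mem_singleton.1 hs)⟩

set_option maxHeartbeats 2000000 in
/-- Core argument: `DT` cannot factor into two non-units. -/
theorem no_nonunit_factors (E : V → V → Prop)
    (hsimple : ∀ v, ¬ E v v)
    (W : Finset V) (hWsc : SConn E ↑W)
    (P Q : MvPolynomial V (MvPolynomial (V × V) ℂ))
    (hPQ : (∑ s : Finset {x // x ∈ W}, MvPolynomial.monomial (monW W s) (dB E W s)) = P * Q)
    (hPu : ¬ IsUnit P) (hQu : ¬ IsUnit Q) : False := by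
  classical
  set DT := ∑ s : Finset {x // x ∈ W}, MvPolynomial.monomial (monW W s) (dB E W s)
    with hDTdef
  have hcoeff : ∀ s, MvPolynomial.coeff (monW W s) DT = dB E W s := coeff_canon E W
  have hD1 : MvPolynomial.coeff (monW W ∅) DT = 1 := by rw [hcoeff, dB_empty]
  have hDne : DT ≠ 0 := by
    intro h
    rw [h, MvPolynomial.coeff_zero] at hD1
    exact one_ne_zero hD1.symm
  have hdeg_le : ∀ v : V, MvPolynomial.degreeOf v DT ≤ 1 := by
    intro v
    rw [MvPolynomial.degreeOf_le_iff]
    intro m hm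
    obtain ⟨s, rfl⟩ := DT_supp E W m hm
    exact monW_le_one W s v
  have hdeg_out : ∀ v : V, v ∉ W → MvPolynomial.degreeOf v DT = 0 := by
    intro v hv
    apply Nat.le_zero.1
    rw [MvPolynomial.degreeOf_le_iff]
    intro m hm
    obtain ⟨s, rfl⟩ := DT_supp E W m hm
    exact le_of_eq (monW_apply_not_mem W s hv)
  have hP0 : P ≠ 0 := fun h => hDne (by rw [hPQ, h, zero_mul])
  have hQ0 : Q ≠ 0 := fun h => hDne (by rw [hPQ, h, mul_zero])
  have hdisj : ∀ v : V, v ∈ P.vars → v ∉ Q.vars := by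
    intro v hvP hvQ
    have h1 := degreeOf_ge_one_of_mem_vars hvP
    have h2 := degreeOf_ge_one_of_mem_vars hvQ
    have h3 := degreeOf_mul_eq_add v hP0 hQ0
    rw [← hPQ] at h3
    have h4 := hdeg_le v
    omega
  have hPW : ∀ v ∈ P.vars, v ∈ W := by
    intro v hv
    by_contra hnW
    have h3 := degreeOf_mul_eq_add v hP0 hQ0
    rw [← hPQ] at h3
    have h1 := degreeOf_ge_one_of_mem_vars hv
    have h2 := hdeg_out v hnW
    omega
  have hQW : ∀ v ∈ Q.vars, v ∈ W := by
    intro v hv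
    by_contra hnW
    have h3 := degreeOf_mul_eq_add v hP0 hQ0
    rw [← hPQ] at h3
    have h1 := degreeOf_ge_one_of_mem_vars hv
    have h2 := hdeg_out v hnW
    omega
  by_cases hSe : P.vars = ∅
  · apply hPu
    have hPC : P = MvPolynomial.C (MvPolynomial.coeff 0 P) := eq_C_of_vars_empty hSe
    have hkey : (MvPolynomial.coeff 0 P) * MvPolynomial.coeff (monW W ∅) Q = 1 := by
      rw [← MvPolynomial.coeff_C_mul, ← hPC, ← hPQ, hD1]
    rw [hPC]
    exact (IsUnit.of_mul_eq_one _ hkey).map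
      (MvPolynomial.C : MvPolynomial (V × V) ℂ →+* MvPolynomial V (MvPolynomial (V × V) ℂ))
  by_cases hTe : Q.vars = ∅
  · apply hQu
    have hQC : Q = MvPolynomial.C (MvPolynomial.coeff 0 Q) := eq_C_of_vars_empty hTe
    have hkey : (MvPolynomial.coeff 0 Q) * MvPolynomial.coeff (monW W ∅) P = 1 := by
      rw [← MvPolynomial.coeff_C_mul, ← hQC, mul_comm, ← hPQ, hD1]
    rw [hQC]
    exact (IsUnit.of_mul_eq_one _ hkey).map
      (MvPolynomial.C : MvPolynomial (V × V) ℂ →+* MvPolynomial V (MvPolynomial (V × V) ℂ))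
  -- both factors contain variables; build the crossing cycle
  obtain ⟨u0, hu0⟩ := Finset.nonempty_iff_ne_empty.2 hSe
  obtain ⟨q0, hq0⟩ := Finset.nonempty_iff_ne_empty.2 hTe
  have hu0W : u0 ∈ W := hPW u0 hu0
  have hq0W : q0 ∈ W := hQW q0 hq0
  have hq0P : q0 ∉ P.vars := fun h => hdisj q0 h hq0
  obtain ⟨a, b, hab, haS, hbS⟩ := exists_crossing
    (hWsc u0 (Finset.mem_coe.2 hu0W) q0 (Finset.mem_coe.2 hq0W)) hu0 hq0P
  obtain ⟨R, nxt, haR, hbR, hstep, hreachA, hreachB⟩ :=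
    cycleFun (r := fun p q => E p q ∧ p ∈ (↑W : Set V) ∧ q ∈ (↑W : Set V)) hab
      (hWsc b hab.2.2 a hab.2.1)
  have hRW : ∀ v ∈ R, v ∈ W := fun v hv => Finset.mem_coe.1 ((hstep v hv).1).2.1
  have hEstep : ∀ v ∈ R, E v (nxt v) := fun v hv => (hstep v hv).1.1
  have hclR : ∀ v ∈ R, nxt v ∈ R := fun v hv => (hstep v hv).2
  have hnxt_ne : ∀ v ∈ R, nxt v ≠ v := by
    intro v hv h
    have hE' := hEstep v hv
    rw [h] at hE'
    exact hsimple v hE'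
  -- the coefficient splitting
  have hsplit : ∀ s : Finset {x // x ∈ W},
      dB E W s =
        MvPolynomial.coeff (monF W (sᶜ.filter (fun i => (i.1 : V) ∈ P.vars))) P *
        MvPolynomial.coeff (monF W (sᶜ.filter (fun i => ¬ (i.1 : V) ∈ P.vars))) Q := by
    intro s
    have hmon : monW W s = monF W (sᶜ.filter (fun i => (i.1 : V) ∈ P.vars)) +
        monF W (sᶜ.filter (fun i => ¬ (i.1 : V) ∈ P.vars)) := by
      rw [monW, monF, monF, Finset.sum_filter_add_sum_filter_not]
    rw [← hcoeff s, hPQ, hmon]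
    refine coeff_mul_split (↑(P.vars) : Set V) (fun v hv => Finset.mem_coe.2 hv)
      (fun v hv hvS => hdisj v (Finset.mem_coe.1 hvS) hv) ?_ ?_
    · intro v hv
      apply monF_apply_zero
      intro i hi hiv
      exact hv (Finset.mem_coe.2 (hiv ▸ (Finset.mem_filter.1 hi).2))
    · intro v hv
      apply monF_apply_zero
      intro i hi hiv
      exact (Finset.mem_filter.1 hi).2 (hiv ▸ (Finset.mem_coe.1 hv))
  -- the four index-set identities
  have e1 : ((univ.filter (fun i : {x // x ∈ W} => (i.1 : V) ∈ R ∧ (i.1 : V) ∈ P.vars))ᶜ).filter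
        (fun i => (i.1 : V) ∈ P.vars) =
      ((univ.filter (fun i : {x // x ∈ W} => (i.1 : V) ∈ R))ᶜ).filter
        (fun i => (i.1 : V) ∈ P.vars) := by
    ext i
    simp only [Finset.mem_filter, Finset.mem_compl, Finset.mem_univ, true_and]
    tauto
  have e2 : ((univ.filter (fun i : {x // x ∈ W} => (i.1 : V) ∈ R ∧ (i.1 : V) ∈ P.vars))ᶜ).filter
        (fun i => ¬ (i.1 : V) ∈ P.vars) =
      ((∅ : Finset {x // x ∈ W})ᶜ).filter (fun i => ¬ (i.1 : V) ∈ P.vars) := by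
    ext i
    simp only [Finset.mem_filter, Finset.mem_compl, Finset.mem_univ, true_and,
      Finset.notMem_empty, not_false_iff]
    tauto
  have e3 : ((univ.filter (fun i : {x // x ∈ W} => (i.1 : V) ∈ R ∧ ¬ (i.1 : V) ∈ P.vars))ᶜ).filter
        (fun i => (i.1 : V) ∈ P.vars) =
      ((∅ : Finset {x // x ∈ W})ᶜ).filter (fun i => (i.1 : V) ∈ P.vars) := by
    ext i
    simp only [Finset.mem_filter, Finset.mem_compl, Finset.mem_univ, true_and,
      Finset.notMem_empty, not_false_iff]
    tauto
  have e4 : ((univ.filter (fun i : {x // x ∈ W} => (i.1 : V) ∈ R ∧ ¬ (i.1 : V) ∈ P.vars))ᶜ).filter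
        (fun i => ¬ (i.1 : V) ∈ P.vars) =
      ((univ.filter (fun i : {x // x ∈ W} => (i.1 : V) ∈ R))ᶜ).filter
        (fun i => ¬ (i.1 : V) ∈ P.vars) := by
    ext i
    simp only [Finset.mem_filter, Finset.mem_compl, Finset.mem_univ, true_and]
    tauto
  have hE0 := hsplit (∅ : Finset {x // x ∈ W})
  rw [dB_empty] at hE0
  have hkey : dB E W (univ.filter (fun i : {x // x ∈ W} => (i.1 : V) ∈ R ∧ (i.1 : V) ∈ P.vars)) *
      dB E W (univ.filter (fun i : {x // x ∈ W} => (i.1 : V) ∈ R ∧ ¬ (i.1 : V) ∈ P.vars)) =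
      dB E W (univ.filter (fun i : {x // x ∈ W} => (i.1 : V) ∈ R)) := by
    rw [hsplit, hsplit, hsplit, e1, e2, e3, e4]
    calc _ = (MvPolynomial.coeff (monF W
          (((univ.filter (fun i : {x // x ∈ W} => (i.1 : V) ∈ R))ᶜ).filter
            (fun i => (i.1 : V) ∈ P.vars))) P *
        MvPolynomial.coeff (monF W
          (((univ.filter (fun i : {x // x ∈ W} => (i.1 : V) ∈ R))ᶜ).filter
            (fun i => ¬ (i.1 : V) ∈ P.vars))) Q) *
        (MvPolynomial.coeff (monF W
          (((∅ : Finset {x // x ∈ W})ᶜ).filter (fun i => (i.1 : V) ∈ P.vars))) P *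
        MvPolynomial.coeff (monF W
          (((∅ : Finset {x // x ∈ W})ᶜ).filter (fun i => ¬ (i.1 : V) ∈ P.vars))) Q) := by
            ring
      _ = _ := by rw [← hE0, mul_one]
  -- evaluate on the cycle weights
  have hescS : ∀ v ∈ R, (v ∈ P.vars) → ∃ n, ¬ (nxt^[n] v ∈ P.vars) := by
    intro v hv _
    obtain ⟨n, hn⟩ := hreachB v hv
    exact ⟨n, by rw [hn]; exact hbS⟩
  have hescT : ∀ v ∈ R, (v ∉ P.vars) → ∃ n, ¬ (nxt^[n] v ∉ P.vars) := by
    intro v hv _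
    obtain ⟨n, hn⟩ := hreachA v hv
    exact ⟨n, fun hcon => hcon (by rw [hn]; exact haS)⟩
  have hz := eval_dB_cycle_zero E W R nxt hRW hEstep hclR hnxt_ne ⟨a, haR⟩
    (univ.filter (fun i : {x // x ∈ W} => (i.1 : V) ∈ R))
    (fun i => by simp only [Finset.mem_filter, Finset.mem_univ, true_and])
  have hnzS := eval_dB_block_ne_zero E W R nxt hRW hEstep hclR hnxt_ne
    (fun v => v ∈ P.vars) hescS
    (univ.filter (fun i : {x // x ∈ W} => (i.1 : V) ∈ R ∧ (i.1 : V) ∈ P.vars))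
    (fun i => by simp only [Finset.mem_filter, Finset.mem_univ, true_and])
  have hnzT := eval_dB_block_ne_zero E W R nxt hRW hEstep hclR hnxt_ne
    (fun v => v ∉ P.vars) hescT
    (univ.filter (fun i : {x // x ∈ W} => (i.1 : V) ∈ R ∧ ¬ (i.1 : V) ∈ P.vars))
    (fun i => by simp only [Finset.mem_filter, Finset.mem_univ, true_and])
  have hfin := congrArg (MvPolynomial.eval (cwt R nxt)) hkey
  rw [map_mul, hz] at hfin
  exact mul_ne_zero hnzS hnzT hfin

set_option maxHeartbeats 1000000 in
theorem statement10' (E : V → V → Prop)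
    (hsimple : ∀ v, ¬ E v v)
    (W : Finset V) (hne : W.Nonempty) (hWsc : SConn E ↑W) :
    Irreducible (Matrix.det (subM (schrM E (xv (V := V)) (yv (V := V))) W)) := by
  classical
  apply (MulEquiv.irreducible_iff (S10.eVB V)).mp
  rw [S10.canonForm E W]
  set DT := ∑ s : Finset {x // x ∈ W}, MvPolynomial.monomial (S10.monW W s) (S10.dB E W s)
    with hDTdef
  have hcoeff : ∀ s, MvPolynomial.coeff (S10.monW W s) DT = S10.dB E W s := S10.coeff_canon E W
  have hD1 : MvPolynomial.coeff (S10.monW W ∅) DT = 1 := by rw [hcoeff, S10.dB_empty]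
  have hDne : DT ≠ 0 := by
    intro h
    rw [h, MvPolynomial.coeff_zero] at hD1
    exact one_ne_zero hD1.symm
  constructor
  · intro hu
    obtain ⟨w0, hw0⟩ := hne
    obtain ⟨Dinv, hDinv⟩ := hu.exists_right_inv
    have hinv0 : Dinv ≠ 0 := by
      intro h
      rw [h, mul_zero] at hDinv
      exact one_ne_zero hDinv.symm
    have hadd := S10.degreeOf_mul_eq_add w0 hDne hinv0
    rw [hDinv] at hadd
    have h1 : MvPolynomial.degreeOf w0
        (1 : MvPolynomial V (MvPolynomial (V × V) ℂ)) = 0 := by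
      rw [show (1 : MvPolynomial V (MvPolynomial (V × V) ℂ)) = MvPolynomial.C 1
        from (map_one _).symm, MvPolynomial.degreeOf_C]
    have hmem : S10.monW W ∅ ∈ DT.support := MvPolynomial.mem_support_iff.2 (by
      rw [hD1]; exact one_ne_zero)
    have hval : S10.monW W (∅ : Finset {x // x ∈ W}) w0 = 1 := by
      rw [S10.monW_apply_mem W ∅ hw0, if_neg (Finset.notMem_empty _)]
    have h2 : 1 ≤ MvPolynomial.degreeOf w0 DT := by
      rw [MvPolynomial.degreeOf_eq_sup]
      calc 1 = S10.monW W (∅ : Finset {x // x ∈ W}) w0 := hval.symm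
        _ ≤ _ := Finset.le_sup (f := fun m => m w0) hmem
    omega
  · intro P Q hPQ
    by_contra hcon0
    push_neg at hcon0
    exact S10.no_nonunit_factors E hsimple W hWsc P Q hPQ hcon0.1 hcon0.2

end S10

/-- For every proper strongly connected subset `W ⊊ V` of a finite
simple strongly connected digraph, the polynomial `det (L_W)` is irreducible in the
polynomial ring `ℂ[x_e, y_v]`. -/
theorem statement10 {V : Type} [Fintype V] (E : V → V → Prop)
    (hsimple : ∀ v, ¬ E v v) (hsc : SConn E Set.univ)
    (W : Finset V) (hne : W.Nonempty) (hproper : W ≠ univ) (hWsc : SConn E ↑W) :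
    Irreducible (Matrix.det (subM (schrM E (xv (V := V)) (yv (V := V))) W)) := by
  exact S10.statement10' E hsimple W hne hWsc
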